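/- Let A be an n-by-n weighted shift matrix (n ≥ 3) with nonzero weights a_1, …, a_n, and suppose there exists k with 1 ≤ k ≤ ⌊n/2⌋ such that k divides n and |a_j| = |a_{k+j}| for all 1 ≤ j ≤ n−k. Set m = n/k, ω = e^{2πi/n}, and θ = (Σ_{j=1}^n arg a_j)/n, and let B be the k-by-k weighted shift matrix with weights |a_1|, …, |a_k|. Then A is unitarily equivalent to e^{iθ}·(B ⊕ ωB ⊕ ω²B ⊕ ⋯ ⊕ ω^{m−1}B), the block diagonal matrix with blocks ω^{j}B for j = 0, 1, …, m−1 (after identifying ℂ^n with the direct sum of m copies of ℂ^k). -/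

import Mathlib

open Matrix

/-- The n-by-n weighted shift matrix with weights `a 0, …, a (n-1)`
(representing `a_1, …, a_n`): the `(i, i+1)` entry is `a i` (cyclically). -/
def wsMatrix {n : ℕ} (a : Fin n → ℂ) : Matrix (Fin n) (Fin n) ℂ :=
  fun i j => if (j : ℕ) = ((i : ℕ) + 1) % n then a i else 0

/-- Two square complex matrices are unitarily equivalent if `B = U* A U`
for some unitary `U`. -/
def UnitarilyEquiv {n : ℕ} (A B : Matrix (Fin n) (Fin n) ℂ) : Prop :=
  ∃ U : Matrix (Fin n) (Fin n) ℂ, U ∈ Matrix.unitaryGroup (Fin n) ℂ ∧ B = Uᴴ * A * U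

/-- cyclic successor/predecessor relation mod k -/
lemma modIff (k i x : ℕ) (hi : i < k) (hx : x < k) :
    (x + 1) % k = i ↔ x = (i + k - 1) % k := by
  have hk : 0 < k := by omega
  constructor
  · rintro rfl
    rcases Nat.lt_or_ge (x + 1) k with h | h
    · rw [Nat.mod_eq_of_lt h]
      have h1 : x + 1 + k - 1 = x + k := by omega
      rw [h1, Nat.add_mod_right, Nat.mod_eq_of_lt hx]
    · have hxk : x + 1 = k := by omega
      rw [hxk, Nat.mod_self]
      have h2 : 0 + k - 1 = k - 1 := by omega
      rw [h2, Nat.mod_eq_of_lt (by omega)]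
      omega
  · rintro rfl
    rcases Nat.eq_zero_or_pos i with h0 | h0
    · subst h0
      have hx0 : (0 + k - 1) % k = k - 1 := by
        rw [show 0 + k - 1 = k - 1 from by omega]
        exact Nat.mod_eq_of_lt (by omega)
      rw [hx0, show k - 1 + 1 = k from by omega, Nat.mod_self]
    · have hx0 : (i + k - 1) % k = i - 1 := by
        rw [show i + k - 1 = (i - 1) + k from by omega, Nat.add_mod_right]
        exact Nat.mod_eq_of_lt (by omega)
      rw [hx0, show i - 1 + 1 = i from by omega, Nat.mod_eq_of_lt hi]

lemma absPeriod (n k : ℕ) (hk : 0 < k) (a : Fin n → ℂ)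
    (hper : ∀ i : Fin n, ∀ h : (i : ℕ) + k < n,
      ‖a i‖ = ‖a ⟨(i : ℕ) + k, h⟩‖) :
    ∀ p (h : p < n) (h2 : p % k < n),
      ‖a ⟨p, h⟩‖ = ‖a ⟨p % k, h2⟩‖ := by
  intro p
  induction p using Nat.strong_induction_on with
  | _ p ih =>
    intro h h2
    rcases Nat.lt_or_ge p k with hpk | hpk
    · exact congrArg ((fun z : ℂ => ‖z‖) ∘ a) (Fin.mk_eq_mk.mpr (Nat.mod_eq_of_lt hpk).symm)
    · have hlt : p - k < n := by omega
      have hadd : ((⟨p - k, hlt⟩ : Fin n) : ℕ) + k < n := by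
        show p - k + k < n; omega
      have e1 := hper ⟨p - k, hlt⟩ hadd
      have e2 : (⟨((⟨p - k, hlt⟩ : Fin n) : ℕ) + k, hadd⟩ : Fin n) = ⟨p, h⟩ :=
        Fin.ext (by show p - k + k = p; omega)
      rw [e2] at e1
      have hmod : (p - k) % k = p % k := (Nat.mod_eq_sub_mod hpk).symm
      have e3 := ih (p - k) (by omega) hlt (by rw [hmod]; exact h2)
      rw [← e1, e3]
      exact congrArg ((fun z : ℂ => ‖z‖) ∘ a) (Fin.mk_eq_mk.mpr hmod)

noncomputable def auxT {n : ℕ} (a : Fin n → ℂ) : ℝ := (∑ j, Complex.arg (a j)) / n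

noncomputable def auxExt {n : ℕ} (a : Fin n → ℂ) : ℕ → ℂ :=
  fun q => if h : q % n < n then a ⟨q % n, h⟩ else 1

noncomputable def auxS {n : ℕ} (a : Fin n → ℂ) (p : ℕ) : ℝ :=
  ∑ q ∈ Finset.range p, Complex.arg (auxExt a q)

noncomputable def auxD {n : ℕ} (a : Fin n → ℂ) (p : ℕ) : ℂ :=
  Complex.exp (Complex.I * (((p : ℝ) * auxT a - auxS a p : ℝ) : ℂ))

noncomputable def auxω (n : ℕ) : ℂ := Complex.exp (2 * Real.pi * Complex.I / n)

lemma auxExt_eq {n : ℕ} (a : Fin n → ℂ) (q : ℕ) (h : q < n) :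
    auxExt a q = a ⟨q, h⟩ := by
  unfold auxExt
  rw [dif_pos (by rw [Nat.mod_eq_of_lt h]; exact h)]
  exact congrArg a (Fin.mk_eq_mk.mpr (Nat.mod_eq_of_lt h))

lemma auxS_succ {n : ℕ} (a : Fin n → ℂ) (p : ℕ) (h : p < n) :
    auxS a (p + 1) = auxS a p + Complex.arg (a ⟨p, h⟩) := by
  unfold auxS
  rw [Finset.sum_range_succ, auxExt_eq a p h]

lemma auxS_n {n : ℕ} (a : Fin n → ℂ) :
    auxS a n = ∑ j, Complex.arg (a j) := by
  unfold auxS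
  rw [← Fin.sum_univ_eq_sum_range (fun q => Complex.arg (auxExt a q)) n]
  exact Finset.sum_congr rfl fun i _ => by rw [auxExt_eq a i i.isLt]

lemma auxD_zero {n : ℕ} (a : Fin n → ℂ) : auxD a 0 = 1 := by
  unfold auxD auxS
  simp

lemma auxD_n {n : ℕ} (hn0 : 0 < n) (a : Fin n → ℂ) : auxD a n = 1 := by
  unfold auxD
  rw [auxS_n]
  have hT : (n : ℝ) * auxT a = ∑ j, Complex.arg (a j) := by
    unfold auxT
    field_simp
  rw [hT]
  simp

lemma auxD_succ_mod {n : ℕ} (hn0 : 0 < n) (a : Fin n → ℂ) (p : ℕ) (h : p < n) :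
    auxD a ((p + 1) % n) = auxD a (p + 1) := by
  rcases Nat.lt_or_ge (p + 1) n with h1 | h1
  · rw [Nat.mod_eq_of_lt h1]
  · have h2 : p + 1 = n := by omega
    rw [h2, Nat.mod_self, auxD_zero, auxD_n hn0]

lemma auxD_key {n : ℕ} (a : Fin n → ℂ) (p : ℕ) (h : p < n) :
    a ⟨p, h⟩ * auxD a (p + 1) =
      ((‖a ⟨p, h⟩‖ : ℝ) : ℂ) * Complex.exp (((auxT a : ℝ) : ℂ) * Complex.I) * auxD a p := by
  conv_lhs => rw [← Complex.norm_mul_exp_arg_mul_I (a ⟨p, h⟩)]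
  unfold auxD
  rw [mul_assoc, mul_assoc, ← Complex.exp_add, ← Complex.exp_add]
  congr 1
  rw [auxS_succ a p h]
  push_cast
  ring

lemma auxD_mul_conj {n : ℕ} (a : Fin n → ℂ) (p : ℕ) :
    (starRingEnd ℂ) (auxD a p) * auxD a p = 1 := by
  unfold auxD
  rw [← Complex.exp_conj, ← Complex.exp_add]
  simp [Complex.exp_eq_one_iff]

lemma auxω_pow_n {n : ℕ} (hn0 : 0 < n) : auxω n ^ n = 1 := by
  unfold auxω
  rw [← Complex.exp_nat_mul]
  have hnC : (n : ℂ) ≠ 0 := Nat.cast_ne_zero.mpr (by omega)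
  rw [mul_div_assoc', mul_comm, mul_div_assoc, div_self hnC, mul_one]
  exact Complex.exp_two_pi_mul_I

lemma auxω_pow_mod {n : ℕ} (hn0 : 0 < n) (s : ℕ) : auxω n ^ s = auxω n ^ (s % n) := by
  conv_lhs => rw [← Nat.mod_add_div s n]
  rw [pow_add, pow_mul, auxω_pow_n hn0, one_pow, mul_one]

lemma auxω_ne_zero (n : ℕ) : auxω n ≠ 0 := Complex.exp_ne_zero _

lemma auxω_conj (n : ℕ) : (starRingEnd ℂ) (auxω n) = (auxω n)⁻¹ := by
  unfold auxω
  rw [← Complex.exp_conj, ← Complex.exp_neg]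
  congr 1
  simp [map_div₀, map_ofNat]
  ring

lemma auxω_prim {n k m : ℕ} (hk0 : 0 < k) (hm0 : 0 < m) (hkm : k * m = n) :
    IsPrimitiveRoot (auxω n ^ k) m := by
  have hn0 : 0 < n := hkm ▸ Nat.mul_pos hk0 hm0
  have h : auxω n ^ k = Complex.exp (2 * Real.pi * Complex.I / m) := by
    unfold auxω
    rw [← Complex.exp_nat_mul]
    congr 1
    have hnC : (n : ℂ) = (k : ℂ) * (m : ℂ) := by exact_mod_cast hkm.symm
    have hkC : (k : ℂ) ≠ 0 := Nat.cast_ne_zero.mpr (by omega)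
    have hmC : (m : ℂ) ≠ 0 := Nat.cast_ne_zero.mpr (by omega)
    rw [hnC]
    field_simp
  rw [h]
  exact Complex.isPrimitiveRoot_exp m (by omega)

lemma geomAux {n k m : ℕ} (hk0 : 0 < k) (hm0 : 0 < m) (hkm : k * m = n) (i : ℕ)
    (j j' : Fin m) :
    ∑ t : Fin m, ((auxω n)⁻¹) ^ ((j : ℕ) * (i + k * (t : ℕ))) *
        auxω n ^ ((j' : ℕ) * (i + k * (t : ℕ))) =
      if j = j' then (m : ℂ) else 0 := by
  have hn0 : 0 < n := hkm ▸ Nat.mul_pos hk0 hm0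
  set ω := auxω n with hω
  have hterm : ∀ t : Fin m,
      (ω⁻¹) ^ ((j : ℕ) * (i + k * (t : ℕ))) * ω ^ ((j' : ℕ) * (i + k * (t : ℕ)))
        = ((ω⁻¹) ^ ((j : ℕ) * i) * ω ^ ((j' : ℕ) * i)) *
          ((ω⁻¹) ^ ((j : ℕ) * k) * ω ^ ((j' : ℕ) * k)) ^ (t : ℕ) := by
    intro t
    rw [mul_pow, ← pow_mul, ← pow_mul]
    rw [show (j : ℕ) * (i + k * (t : ℕ)) = (j : ℕ) * i + (j : ℕ) * k * (t : ℕ) by ring,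
      show (j' : ℕ) * (i + k * (t : ℕ)) = (j' : ℕ) * i + (j' : ℕ) * k * (t : ℕ) by ring,
      pow_add, pow_add]
    ring
  rw [Finset.sum_congr rfl fun t _ => hterm t, ← Finset.mul_sum]
  by_cases hjj : j = j'
  · subst hjj
    rw [if_pos rfl]
    have h1 : (ω⁻¹) ^ ((j : ℕ) * i) * ω ^ ((j : ℕ) * i) = 1 := by
      rw [inv_pow, inv_mul_cancel₀ (pow_ne_zero _ (auxω_ne_zero n))]
    have h2 : (ω⁻¹) ^ ((j : ℕ) * k) * ω ^ ((j : ℕ) * k) = 1 := by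
      rw [inv_pow, inv_mul_cancel₀ (pow_ne_zero _ (auxω_ne_zero n))]
    rw [h1, h2]
    simp
  · rw [if_neg hjj]
    set z := (ω⁻¹) ^ ((j : ℕ) * k) * ω ^ ((j' : ℕ) * k) with hz
    have hzm : z ^ m = 1 := by
      rw [hz, mul_pow, ← pow_mul, ← pow_mul, inv_pow]
      rw [show (j : ℕ) * k * m = n * (j : ℕ) by rw [← hkm]; ring,
        show (j' : ℕ) * k * m = n * (j' : ℕ) by rw [← hkm]; ring]
      rw [pow_mul, pow_mul, auxω_pow_n hn0, one_pow, one_pow, inv_one, one_mul]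
    have hz1 : z ≠ 1 := by
      intro hcon
      rw [hz, inv_pow, inv_mul_eq_one₀ (pow_ne_zero _ (auxω_ne_zero n))] at hcon
      rw [show (j : ℕ) * k = k * (j : ℕ) by ring, show (j' : ℕ) * k = k * (j' : ℕ) by ring,
        pow_mul, pow_mul] at hcon
      exact hjj (Fin.ext ((auxω_prim hk0 hm0 hkm).pow_inj j.isLt j'.isLt hcon))
    have hsum : ∑ t : Fin m, z ^ (t : ℕ) = 0 := by
      rw [Fin.sum_univ_eq_sum_range (fun t => z ^ t) m, geom_sum_eq hz1, hzm]
      simp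
    rw [hsum, mul_zero]
open Matrix

def eqKM (n k m : ℕ) (hkm : k * m = n) : Fin k × Fin m ≃ Fin n :=
  finProdFinEquiv.trans (finCongr hkm)

lemma eqKM_val (n k m : ℕ) (hkm : k * m = n) (x : Fin k × Fin m) :
    ((eqKM n k m hkm x : Fin n) : ℕ) = (x.2 : ℕ) + m * (x.1 : ℕ) := rfl

noncomputable def auxV (n k m : ℕ) (a : Fin n → ℂ) : Fin n → Fin k × Fin m → ℂ :=
  fun p x => if (p : ℕ) % k = (x.1 : ℕ) then
      auxD a p * auxω n ^ ((x.2 : ℕ) * (p : ℕ)) / (Real.sqrt m : ℂ) else 0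

noncomputable def auxU (n k m : ℕ) (hkm : k * m = n) (a : Fin n → ℂ) :
    Matrix (Fin n) (Fin n) ℂ :=
  Matrix.of fun p q => auxV n k m a p ((eqKM n k m hkm).symm q)

lemma auxU_apply (n k m : ℕ) (hkm : k * m = n) (a : Fin n → ℂ) (p : Fin n)
    (x : Fin k × Fin m) :
    auxU n k m hkm a p (eqKM n k m hkm x) = auxV n k m a p x := by
  simp [auxU, Equiv.symm_apply_apply]

lemma auxD_star_mul {n : ℕ} (a : Fin n → ℂ) (p : ℕ) :
    star (auxD a p) * auxD a p = 1 := by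
  rw [show (star (auxD a p)) = (starRingEnd ℂ) (auxD a p) from rfl]
  exact auxD_mul_conj a p

lemma auxω_star_pow (n e : ℕ) : star (auxω n ^ e) = ((auxω n)⁻¹) ^ e := by
  rw [star_pow, show (star (auxω n)) = (starRingEnd ℂ) (auxω n) from rfl, auxω_conj]

lemma sqrt_sq_C (m : ℕ) :
    ((Real.sqrt m : ℝ) : ℂ) * ((Real.sqrt m : ℝ) : ℂ) = (m : ℂ) := by
  rw [← Complex.ofReal_mul, Real.mul_self_sqrt (Nat.cast_nonneg m)]
  norm_num

lemma auxU_val_at (n k m : ℕ) (hk0 : 0 < k) (hkm : k * m = n) (hmk : m * k = n)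
    (a : Fin n → ℂ) (t : Fin m) (x : Fin k) (y : Fin k × Fin m) :
    auxU n k m hkm a (eqKM n m k hmk (t, x)) (eqKM n k m hkm y) =
      if x = y.1 then
        auxD a ((x : ℕ) + k * (t : ℕ)) *
          auxω n ^ ((y.2 : ℕ) * ((x : ℕ) + k * (t : ℕ))) / (Real.sqrt m : ℂ)
      else 0 := by
  rw [auxU_apply]
  have hv : ((eqKM n m k hmk (t, x) : Fin n) : ℕ) = (x : ℕ) + k * (t : ℕ) := rfl
  have hmod : ((x : ℕ) + k * (t : ℕ)) % k = (x : ℕ) := by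
    rw [Nat.add_mul_mod_self_left, Nat.mod_eq_of_lt x.isLt]
  unfold auxV
  rw [hv, hmod]
  congr 1
  simp [Fin.val_inj]

lemma auxU_unitary (n k m : ℕ) (hk0 : 0 < k) (hm0 : 0 < m) (hkm : k * m = n)
    (a : Fin n → ℂ) : (auxU n k m hkm a)ᴴ * auxU n k m hkm a = 1 := by
  have hn0 : 0 < n := hkm ▸ Nat.mul_pos hk0 hm0
  have hmk : m * k = n := by rw [mul_comm]; exact hkm
  have hmC : (m : ℂ) ≠ 0 := Nat.cast_ne_zero.mpr (by omega)
  ext q q'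
  obtain ⟨⟨i, j⟩, rfl⟩ := (eqKM n k m hkm).surjective q
  obtain ⟨⟨i', j'⟩, rfl⟩ := (eqKM n k m hkm).surjective q'
  rw [Matrix.mul_apply]
  simp only [Matrix.conjTranspose_apply]
  rw [← Equiv.sum_comp (eqKM n m k hmk)
    (fun p => star (auxU n k m hkm a p (eqKM n k m hkm (i, j))) *
      auxU n k m hkm a p (eqKM n k m hkm (i', j')))]
  rw [Fintype.sum_prod_type]
  have key : ∀ (t : Fin m) (x : Fin k),
      star (auxU n k m hkm a (eqKM n m k hmk (t, x)) (eqKM n k m hkm (i, j))) *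
        auxU n k m hkm a (eqKM n m k hmk (t, x)) (eqKM n k m hkm (i', j')) =
      if x = i ∧ x = i' then
        ((auxω n)⁻¹ ^ ((j : ℕ) * ((x : ℕ) + k * (t : ℕ))) *
          auxω n ^ ((j' : ℕ) * ((x : ℕ) + k * (t : ℕ)))) / (m : ℂ)
      else 0 := by
    intro t x
    rw [auxU_val_at n k m hk0 hkm hmk a t x (i, j),
        auxU_val_at n k m hk0 hkm hmk a t x (i', j')]
    by_cases h1 : x = i
    · by_cases h2 : x = i'
      · rw [if_pos h1, if_pos h2, if_pos ⟨h1, h2⟩]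
        set p := (x : ℕ) + k * (t : ℕ)
        have hr : star ((Real.sqrt m : ℝ) : ℂ) = ((Real.sqrt m : ℝ) : ℂ) := by
          rw [show (star (((Real.sqrt m : ℝ) : ℂ))) = (starRingEnd ℂ) ((Real.sqrt m : ℝ) : ℂ) from rfl]
          exact Complex.conj_ofReal _
        rw [star_div₀, hr, star_mul']
        rw [div_mul_div_comm, sqrt_sq_C]
        rw [auxω_star_pow]
        congr 1
        rw [mul_mul_mul_comm]
        rw [show star (auxD a p) * auxD a p = 1 from auxD_star_mul a p, one_mul]
      · rw [if_pos h1, if_neg h2, if_neg (fun hc => h2 hc.2), mul_zero]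
    · rw [if_neg h1, star_zero, zero_mul, if_neg (fun hc : x = i ∧ x = i' => h1 hc.1)]
  rw [Finset.sum_congr rfl fun t _ => Finset.sum_congr rfl fun x _ => key t x]
  by_cases hii : i = i'
  · subst hii
    have hcoll : ∀ t : Fin m, (∑ x : Fin k, if x = i ∧ x = i then
        ((auxω n)⁻¹ ^ ((j : ℕ) * ((x : ℕ) + k * (t : ℕ))) *
          auxω n ^ ((j' : ℕ) * ((x : ℕ) + k * (t : ℕ)))) / (m : ℂ) else 0) =
        ((auxω n)⁻¹ ^ ((j : ℕ) * ((i : ℕ) + k * (t : ℕ))) *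
          auxω n ^ ((j' : ℕ) * ((i : ℕ) + k * (t : ℕ)))) / (m : ℂ) := by
      intro t
      simp only [and_self]
      rw [Finset.sum_ite_eq' Finset.univ i, if_pos (Finset.mem_univ i)]
    rw [Finset.sum_congr rfl fun t _ => hcoll t, ← Finset.sum_div]
    rw [geomAux hk0 hm0 hkm (i : ℕ) j j']
    rw [Matrix.one_apply]
    by_cases hjj : j = j'
    · subst hjj
      rw [if_pos rfl, if_pos rfl, div_self hmC]
    · rw [if_neg hjj, if_neg (fun hc => hjj (congrArg Prod.snd ((eqKM n k m hkm).injective hc))),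
        zero_div]
  · rw [Matrix.one_apply,
      if_neg (fun hc => hii (congrArg Prod.fst ((eqKM n k m hkm).injective hc)))]
    refine Finset.sum_eq_zero fun t _ => Finset.sum_eq_zero fun x _ => ?_
    exact if_neg (fun hc => hii (hc.1.symm.trans hc.2))

noncomputable def auxB (n k m : ℕ) (hkm : k * m = n) (hkn : k ≤ n) (a : Fin n → ℂ) :
    Matrix (Fin n) (Fin n) ℂ :=
  Complex.exp ((((∑ j, Complex.arg (a j)) / n : ℝ) : ℂ) * Complex.I) •
    (Matrix.reindex (eqKM n k m hkm) (eqKM n k m hkm)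
      (Matrix.blockDiagonal fun j : Fin m =>
        auxω n ^ (j : ℕ) •
          wsMatrix fun i : Fin k => ((‖a (Fin.castLE hkn i)‖ : ℝ) : ℂ)))

lemma auxB_apply (n k m : ℕ) (hkm : k * m = n) (hkn : k ≤ n) (a : Fin n → ℂ)
    (x : Fin k × Fin m) (i : Fin k) (j : Fin m) :
    auxB n k m hkm hkn a (eqKM n k m hkm x) (eqKM n k m hkm (i, j)) =
      Complex.exp (((auxT a : ℝ) : ℂ) * Complex.I) *
        (if x.2 = j then
          auxω n ^ ((x.2 : ℕ)) *
            (if (i : ℕ) = ((x.1 : ℕ) + 1) % k then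
              ((‖a (Fin.castLE hkn x.1)‖ : ℝ) : ℂ) else 0)
        else 0) := by
  unfold auxB
  rw [Matrix.smul_apply, Matrix.reindex_apply, Matrix.submatrix_apply,
    Equiv.symm_apply_apply, Equiv.symm_apply_apply, Matrix.blockDiagonal_apply]
  rw [show ((((∑ j, Complex.arg (a j)) / n : ℝ) : ℂ)) = ((auxT a : ℝ) : ℂ) from rfl]
  rw [smul_eq_mul]
  congr 1

lemma auxAU (n k m : ℕ) (hk0 : 0 < k) (hm0 : 0 < m) (hkm : k * m = n)
    (hkn : k ≤ n) (hkd : k ∣ n) (a : Fin n → ℂ)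
    (hab : ∀ p (h : p < n) (h2 : p % k < n),
      ‖a ⟨p, h⟩‖ = ‖a ⟨p % k, h2⟩‖) :
    wsMatrix a * auxU n k m hkm a = auxU n k m hkm a * auxB n k m hkm hkn a := by
  have hn0 : 0 < n := hkm ▸ Nat.mul_pos hk0 hm0
  ext p q
  obtain ⟨⟨i, j⟩, rfl⟩ := (eqKM n k m hkm).surjective q
  have hp1 : ((p : ℕ) + 1) % n < n := Nat.mod_lt _ hn0
  set p1 : Fin n := ⟨((p : ℕ) + 1) % n, hp1⟩ with hp1def
  -- LHS
  rw [Matrix.mul_apply, Finset.sum_eq_single p1]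
  rotate_left
  · intro r _ hr
    unfold wsMatrix
    rw [if_neg (fun hc => hr (Fin.ext hc)), zero_mul]
  · intro h; exact absurd (Finset.mem_univ p1) h
  rw [show wsMatrix a p p1 = a p from if_pos rfl]
  -- RHS
  rw [Matrix.mul_apply,
    ← Equiv.sum_comp (eqKM n k m hkm)
      (fun r => auxU n k m hkm a p r * auxB n k m hkm hkn a r (eqKM n k m hkm (i, j))),
    Fintype.sum_prod_type]
  have hrw : ∀ (i' : Fin k) (j' : Fin m),
      auxU n k m hkm a p (eqKM n k m hkm (i', j')) *
        auxB n k m hkm hkn a (eqKM n k m hkm (i', j')) (eqKM n k m hkm (i, j)) =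
      if j' = j then
        (if (i : ℕ) = ((i' : ℕ) + 1) % k then
          auxV n k m a p (i', j') *
            (Complex.exp (((auxT a : ℝ) : ℂ) * Complex.I) *
              (auxω n ^ ((j : ℕ)) * ((‖a (Fin.castLE hkn i')‖ : ℝ) : ℂ)))
        else 0)
      else 0 := by
    intro i' j'
    rw [auxU_apply, auxB_apply]
    by_cases h1 : j' = j
    · subst h1
      rw [if_pos rfl, if_pos rfl]
      by_cases h2 : (i : ℕ) = ((i' : ℕ) + 1) % k
      · rw [if_pos h2, if_pos h2]
      · rw [if_neg h2, if_neg h2, mul_zero, mul_zero, mul_zero]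
    · rw [if_neg h1, if_neg h1, mul_zero, mul_zero]
  rw [Finset.sum_congr rfl fun i' _ => Finset.sum_congr rfl fun j' _ => hrw i' j']
  rw [Finset.sum_congr rfl fun (i' : Fin k) _ =>
    (Finset.sum_ite_eq' Finset.univ j (fun j' => if (i : ℕ) = ((i' : ℕ) + 1) % k then
          auxV n k m a p (i', j') *
            (Complex.exp (((auxT a : ℝ) : ℂ) * Complex.I) *
              (auxω n ^ ((j : ℕ)) * ((‖a (Fin.castLE hkn i')‖ : ℝ) : ℂ)))
        else 0))]
  simp only [if_pos (Finset.mem_univ j)]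
  set im : Fin k := ⟨((i : ℕ) + k - 1) % k, Nat.mod_lt _ hk0⟩ with himdef
  have hcon : ∀ i' : Fin k, ((i : ℕ) = ((i' : ℕ) + 1) % k) ↔ (i' = im) := by
    intro i'
    rw [eq_comm, modIff k (i : ℕ) (i' : ℕ) i.isLt i'.isLt]
    exact ⟨fun h => Fin.ext h, fun h => congrArg Fin.val h⟩
  rw [Finset.sum_congr rfl fun i' _ => if_congr (hcon i') rfl rfl]
  rw [Finset.sum_ite_eq' Finset.univ im, if_pos (Finset.mem_univ im)]
  -- now the pointwise identity
  rw [auxU_apply]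
  unfold auxV
  by_cases hc : ((p : ℕ) + 1) % k = (i : ℕ)
  · have hcc : ((p1 : Fin n) : ℕ) % k = (i : ℕ) := by
      show ((p : ℕ) + 1) % n % k = (i : ℕ)
      rw [Nat.mod_mod_of_dvd ((p : ℕ) + 1) hkd]; exact hc
    have hc2 : (p : ℕ) % k = ((i : ℕ) + k - 1) % k :=
      (modIff k (i : ℕ) ((p : ℕ) % k) i.isLt (Nat.mod_lt _ hk0)).mp
        (by rw [Nat.mod_add_mod]; exact hc)
    rw [if_pos hcc, if_pos (show (p : ℕ) % k = ((im : Fin k) : ℕ) from hc2)]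
    have hd : auxD a (((p : ℕ) + 1) % n) = auxD a ((p : ℕ) + 1) :=
      auxD_succ_mod hn0 a (p : ℕ) p.isLt
    have hω : auxω n ^ ((j : ℕ) * (((p : ℕ) + 1) % n)) =
        auxω n ^ ((j : ℕ) * ((p : ℕ) + 1)) := by
      rw [auxω_pow_mod hn0, auxω_pow_mod hn0 ((j : ℕ) * ((p : ℕ) + 1))]
      congr 1
      conv_lhs => rw [Nat.mul_mod]
      conv_rhs => rw [Nat.mul_mod]
      rw [Nat.mod_mod_of_dvd ((p : ℕ) + 1) (dvd_refl n)]
    have hpk : (p : ℕ) % k < n := lt_of_lt_of_le (Nat.mod_lt _ hk0) hkn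
    have hbim : ((‖a (Fin.castLE hkn im)‖ : ℝ) : ℂ) =
        ((‖a p‖ : ℝ) : ℂ) := by
      have him2 : Fin.castLE hkn im = ⟨(p : ℕ) % k, hpk⟩ := Fin.ext hc2.symm
      rw [him2]
      have := hab (p : ℕ) p.isLt hpk
      rw [Fin.eta] at this
      rw [← this]
    have key := auxD_key a (p : ℕ) p.isLt
    rw [Fin.eta] at key
    rw [show ((p1 : Fin n) : ℕ) = ((p : ℕ) + 1) % n from rfl, hd, hω, hbim,
      show (j : ℕ) * ((p : ℕ) + 1) = (j : ℕ) * (p : ℕ) + (j : ℕ) from by ring, pow_add]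
    linear_combination (auxω n ^ ((j : ℕ) * (p : ℕ)) * auxω n ^ (j : ℕ) /
      ((Real.sqrt m : ℝ) : ℂ)) * key
  · have hcc : ¬(((p1 : Fin n) : ℕ) % k = (i : ℕ)) := by
      show ¬(((p : ℕ) + 1) % n % k = (i : ℕ))
      rw [Nat.mod_mod_of_dvd ((p : ℕ) + 1) hkd]; exact hc
    have hc2 : ¬((p : ℕ) % k = ((i : ℕ) + k - 1) % k) := by
      intro h
      apply hc
      rw [← Nat.mod_add_mod]
      exact (modIff k (i : ℕ) ((p : ℕ) % k) i.isLt (Nat.mod_lt _ hk0)).mpr h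
    rw [if_neg hcc, if_neg (show ¬((p : ℕ) % k = ((im : Fin k) : ℕ)) from hc2),
      mul_zero, zero_mul]

theorem keyAux (n k m : ℕ) (hk0 : 0 < k) (hm0 : 0 < m) (hkm : k * m = n)
    (hkn : k ≤ n) (hkd : k ∣ n) (a : Fin n → ℂ)
    (hab : ∀ p (h : p < n) (h2 : p % k < n),
      ‖a ⟨p, h⟩‖ = ‖a ⟨p % k, h2⟩‖) :
    UnitarilyEquiv (wsMatrix a) (auxB n k m hkm hkn a) := by
  refine ⟨auxU n k m hkm a, ?_, ?_⟩
  · rw [Matrix.mem_unitaryGroup_iff', Matrix.star_eq_conjTranspose]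
    exact auxU_unitary n k m hk0 hm0 hkm a
  · calc auxB n k m hkm hkn a
        = 1 * auxB n k m hkm hkn a := (one_mul _).symm
      _ = ((auxU n k m hkm a)ᴴ * auxU n k m hkm a) * auxB n k m hkm hkn a := by
          rw [auxU_unitary n k m hk0 hm0 hkm a]
      _ = (auxU n k m hkm a)ᴴ * (auxU n k m hkm a * auxB n k m hkm hkn a) := by
          rw [mul_assoc]
      _ = (auxU n k m hkm a)ᴴ * (wsMatrix a * auxU n k m hkm a) := by
          rw [auxAU n k m hk0 hm0 hkm hkn hkd a hab]
      _ = (auxU n k m hkm a)ᴴ * wsMatrix a * auxU n k m hkm a := by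
          rw [mul_assoc]

theorem stmt11 (n k : ℕ) (hn : 3 ≤ n) (a : Fin n → ℂ) (ha : ∀ i, a i ≠ 0)
    (hk1 : 1 ≤ k) (hk2 : k ≤ n / 2) (hkd : k ∣ n)
    (hper : ∀ i : Fin n, ∀ h : (i : ℕ) + k < n,
      ‖a i‖ = ‖a ⟨(i : ℕ) + k, h⟩‖) :
    UnitarilyEquiv (wsMatrix a)
      (Complex.exp ((((∑ j, Complex.arg (a j)) / n : ℝ) : ℂ) * Complex.I) •
        (Matrix.reindex (finProdFinEquiv.trans (finCongr (Nat.mul_div_cancel' hkd)))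
            (finProdFinEquiv.trans (finCongr (Nat.mul_div_cancel' hkd)))
          (Matrix.blockDiagonal fun j : Fin (n / k) =>
            Complex.exp (2 * Real.pi * Complex.I / n) ^ (j : ℕ) •
              wsMatrix fun i : Fin k =>
                ((‖a (Fin.castLE (le_trans hk2 (Nat.div_le_self n 2)) i)‖ : ℝ) : ℂ)))) := by
  have hk0 : 0 < k := hk1
  have hkn : k ≤ n := le_trans hk2 (Nat.div_le_self n 2)
  have hkm : k * (n / k) = n := Nat.mul_div_cancel' hkd
  have hm0 : 0 < n / k := Nat.div_pos hkn hk0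
  have hab := absPeriod n k hk0 a hper
  exact keyAux n k (n / k) hk0 hm0 hkm hkn hkd a hab
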